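/- Let G be a finite p-group and H a non-abelian normal subgroup of G with H ≤ γ_i(G). Then |H/H'| ≥ p^{i+1} and |H| ≥ p^{i+2}. -/

import Mathlib

open Subgroup
open scoped commutatorElement

namespace HallHelper

variable {G : Type*} [Group G]

/-- Three subgroups lemma, `≤ N` version for normal `N`. -/
theorem three_subgroups {A B C N : Subgroup G} [N.Normal]
    (h1 : ⁅⁅B, C⁆, A⁆ ≤ N) (h2 : ⁅⁅C, A⁆, B⁆ ≤ N) : ⁅⁅A, B⁆, C⁆ ≤ N := by
  have hker : (QuotientGroup.mk' N).ker = N := QuotientGroup.ker_mk' N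
  have key : ⁅⁅A.map (QuotientGroup.mk' N), B.map (QuotientGroup.mk' N)⁆,
      C.map (QuotientGroup.mk' N)⁆ = ⊥ := by
    apply commutator_commutator_eq_bot_of_rotate
    · rw [← map_commutator, ← map_commutator, Subgroup.map_eq_bot_iff, hker]; exact h1
    · rw [← map_commutator, ← map_commutator, Subgroup.map_eq_bot_iff, hker]; exact h2
  rwa [← map_commutator, ← map_commutator, Subgroup.map_eq_bot_iff, hker] at key

theorem top_ucs (r : ℕ) :
    ⁅(⊤ : Subgroup G), Subgroup.upperCentralSeries G (r + 1)⁆ ≤ Subgroup.upperCentralSeries G r := by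
  rw [commutator_comm]
  refine commutator_le.mpr fun z hz g _ => ?_
  exact Subgroup.mem_upperCentralSeries_succ_iff.mp hz g

theorem lcs_ucs : ∀ k r : ℕ,
    ⁅Subgroup.lowerCentralSeries (⊤ : Subgroup G) k, Subgroup.upperCentralSeries G (k + r + 1)⁆ ≤ Subgroup.upperCentralSeries G r
  | 0, r => by simpa using top_ucs (G := G) r
  | (k+1), r => by
    show ⁅⁅Subgroup.lowerCentralSeries (⊤ : Subgroup G) k, ⊤⁆, Subgroup.upperCentralSeries G (k + 1 + r + 1)⁆ ≤ _
    apply three_subgroups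
    · rw [show k + 1 + r + 1 = (k + r + 1) + 1 by omega]
      calc ⁅⁅(⊤ : Subgroup G), Subgroup.upperCentralSeries G ((k + r + 1) + 1)⁆, Subgroup.lowerCentralSeries (⊤ : Subgroup G) k⁆
          ≤ ⁅Subgroup.upperCentralSeries G (k + r + 1), Subgroup.lowerCentralSeries (⊤ : Subgroup G) k⁆ :=
            commutator_mono (top_ucs _) le_rfl
        _ = ⁅Subgroup.lowerCentralSeries (⊤ : Subgroup G) k, Subgroup.upperCentralSeries G (k + r + 1)⁆ := commutator_comm _ _
        _ ≤ Subgroup.upperCentralSeries G r := lcs_ucs k r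
    · calc ⁅⁅Subgroup.upperCentralSeries G (k + 1 + r + 1), Subgroup.lowerCentralSeries (⊤ : Subgroup G) k⁆, (⊤ : Subgroup G)⁆
          = ⁅⁅Subgroup.lowerCentralSeries (⊤ : Subgroup G) k, Subgroup.upperCentralSeries G (k + (r + 1) + 1)⁆, (⊤ : Subgroup G)⁆ := by
            rw [commutator_comm (Subgroup.upperCentralSeries G (k + 1 + r + 1)),
              show k + 1 + r + 1 = k + (r + 1) + 1 by omega]
        _ ≤ ⁅Subgroup.upperCentralSeries G (r + 1), (⊤ : Subgroup G)⁆ :=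
            commutator_mono (lcs_ucs k (r + 1)) le_rfl
        _ = ⁅(⊤ : Subgroup G), Subgroup.upperCentralSeries G (r + 1)⁆ := commutator_comm _ _
        _ ≤ Subgroup.upperCentralSeries G r := top_ucs r

/-- The series `H, ⁅H,G⁆, ⁅⁅H,G⁆,G⁆, …`. -/
def ds (H : Subgroup G) : ℕ → Subgroup G
  | 0 => H
  | n + 1 => ⁅ds H n, ⊤⁆

variable (H : Subgroup G)

@[simp] theorem ds_zero : ds H 0 = H := rfl

theorem ds_succ (n : ℕ) : ds H (n + 1) = ⁅ds H n, ⊤⁆ := rfl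

variable [hN : H.Normal]

instance ds_normal : ∀ n, (ds H n).Normal
  | 0 => hN
  | n + 1 => by
    haveI := ds_normal n
    rw [ds_succ]
    infer_instance

theorem ds_succ_le (n : ℕ) : ds H (n + 1) ≤ ds H n := by
  rw [ds_succ]; exact commutator_le_left _ _

theorem ds_antitone : Antitone (ds H) :=
  antitone_nat_of_succ_le (ds_succ_le H)

theorem ds_le_self : ∀ n, ds H n ≤ H
  | 0 => le_rfl
  | n + 1 => (ds_succ_le H n).trans (ds_le_self n)

theorem ds_lcs : ∀ (k n : ℕ), ⁅ds H n, Subgroup.lowerCentralSeries (⊤ : Subgroup G) k⁆ ≤ ds H (n + k + 1)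
  | 0, n => by rw [Subgroup.lowerCentralSeries_zero, ← ds_succ]
  | (k+1), n => by
    show ⁅ds H n, ⁅Subgroup.lowerCentralSeries (⊤ : Subgroup G) k, ⊤⁆⁆ ≤ _
    rw [commutator_comm]
    apply three_subgroups
    · calc ⁅⁅(⊤ : Subgroup G), ds H n⁆, Subgroup.lowerCentralSeries (⊤ : Subgroup G) k⁆
          = ⁅ds H (n + 1), Subgroup.lowerCentralSeries (⊤ : Subgroup G) k⁆ := by
            rw [commutator_comm (⊤ : Subgroup G), ← ds_succ]
        _ ≤ ds H ((n + 1) + k + 1) := ds_lcs k (n + 1)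
        _ = ds H (n + (k + 1) + 1) := by rw [show (n+1)+k+1 = n+(k+1)+1 by omega]
    · calc ⁅⁅ds H n, Subgroup.lowerCentralSeries (⊤ : Subgroup G) k⁆, (⊤ : Subgroup G)⁆
          ≤ ⁅ds H (n + k + 1), (⊤ : Subgroup G)⁆ := commutator_mono (ds_lcs k n) le_rfl
        _ = ds H (n + k + 2) := (ds_succ H _).symm
        _ = ds H (n + (k + 1) + 1) := by rw [show n+k+2 = n+(k+1)+1 by omega]

theorem ds_descend {p : ℕ} [Fact p.Prime] [Finite G] (hG : IsPGroup p G)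
    {K : Subgroup G} [K.Normal] (hK : K ≠ ⊥) : ⁅K, (⊤ : Subgroup G)⁆ < K := by
  refine lt_of_le_of_ne (commutator_le_left _ _) fun h => hK ?_
  haveI : Group.IsNilpotent G := hG.isNilpotent
  have hall : ∀ n, K ≤ Subgroup.lowerCentralSeries (⊤ : Subgroup G) n := by
    intro n
    induction n with
    | zero => exact le_top
    | succ n ih =>
      calc K = ⁅K, ⊤⁆ := h.symm
        _ ≤ ⁅Subgroup.lowerCentralSeries (⊤ : Subgroup G) n, ⊤⁆ := commutator_mono ih le_rfl
  have := hall (Group.nilpotencyClass G)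
  rwa [Subgroup.lowerCentralSeries_nilpotencyClass, le_bot_iff] at this

theorem relindex_ne_zero' [Finite G] (A B : Subgroup G) : A.relIndex B ≠ 0 :=
  Subgroup.index_ne_zero_of_finite

theorem relindex_ppow {p : ℕ} [Fact p.Prime] [Finite G] (hG : IsPGroup p G)
    (A B : Subgroup G) : ∃ m, A.relIndex B = p ^ m := by
  haveI : (A.subgroupOf B).FiniteIndex := ⟨Subgroup.index_ne_zero_of_finite⟩
  exact (hG.to_subgroup B).index (A.subgroupOf B)

theorem p_le_relindex {p : ℕ} [hp : Fact p.Prime] [Finite G] (hG : IsPGroup p G)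
    {A B : Subgroup G} (h : ¬ B ≤ A) : p ≤ A.relIndex B := by
  obtain ⟨m, hm⟩ := relindex_ppow hG A B
  have hm1 : 1 ≤ m := by
    rcases Nat.eq_zero_or_pos m with rfl | h'
    · rw [pow_zero] at hm
      exact absurd (Subgroup.relIndex_eq_one.mp hm) h
    · exact h'
  calc p = p ^ 1 := (pow_one p).symm
    _ ≤ p ^ m := Nat.pow_le_pow_right hp.out.pos hm1
    _ = A.relIndex B := hm.symm

theorem chain {p : ℕ} [hp : Fact p.Prime] [Finite G] (hG : IsPGroup p G) :
    ∀ (n k : ℕ), ds H (k + n) ≠ ⊥ → p ^ n ≤ (ds H (k + n)).relIndex (ds H k)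
  | 0, k, _ => by simp [Subgroup.relIndex_self]
  | n + 1, k, hbot => by
    have hb1 : ds H ((k + 1) + n) ≠ ⊥ := by rwa [show (k+1)+n = k+(n+1) by omega]
    have ih := chain hG n (k + 1) hb1
    have hk : ds H k ≠ ⊥ := by
      intro h
      apply hbot
      rw [← le_bot_iff, ← h]
      exact ds_antitone H (Nat.le_add_right _ _)
    have hstep : p ≤ (ds H (k + 1)).relIndex (ds H k) := by
      apply p_le_relindex hG
      rw [ds_succ]
      exact not_le_of_gt (ds_descend hG hk)
    have tower := Subgroup.relIndex_mul_relIndex (ds H (k + (n+1))) (ds H (k+1)) (ds H k)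
      (ds_antitone H (by omega)) (ds_antitone H (by omega))
    calc p ^ (n + 1) = p ^ n * p := by ring
      _ ≤ (ds H (k + (n+1))).relIndex (ds H (k+1)) * (ds H (k+1)).relIndex (ds H k) := by
          refine Nat.mul_le_mul ?_ hstep
          rwa [show k + (n+1) = (k+1)+n by omega]
      _ = (ds H (k + (n+1))).relIndex (ds H k) := tower

theorem aux {p : ℕ} [hp : Fact p.Prime] {G : Type*} [Group G] [Finite G] (hG : IsPGroup p G)
    (H : Subgroup G) [H.Normal] (hne : ⁅H, H⁆ ≠ ⊥)
    (hcent : ⁅⁅H, H⁆, (⊤ : Subgroup G)⁆ = ⊥)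
    (i : ℕ) (hi : 1 ≤ i) (hle : H ≤ Subgroup.lowerCentralSeries (⊤ : Subgroup G) (i - 1)) :
    p ^ (i + 1) ≤ (⁅H, H⁆).relIndex H := by
  by_contra hcon
  push_neg at hcon
  have hHbot : H ≠ ⊥ := by
    intro h
    exact hne (le_bot_iff.mp (h ▸ commutator_le_left H H))
  have hH'le : ⁅H, H⁆ ≤ ds H i := by
    have h1 : ⁅ds H 0, Subgroup.lowerCentralSeries (⊤ : Subgroup G) (i - 1)⁆ ≤ ds H (0 + (i - 1) + 1) := ds_lcs H (i-1) 0
    rw [show 0 + (i - 1) + 1 = i by omega] at h1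
    exact le_trans (commutator_mono le_rfl hle) h1
  have hdsibot : ds H i ≠ ⊥ := by
    intro h
    exact hne (le_bot_iff.mp (h ▸ hH'le))
  obtain ⟨m, hm⟩ := relindex_ppow hG ⁅H, H⁆ H
  have hmi : m ≤ i := by
    by_contra h
    push_neg at h
    have : p ^ (i + 1) ≤ p ^ m := Nat.pow_le_pow_right hp.out.pos h
    omega
  have hchain : p ^ i ≤ (ds H i).relIndex H := by
    have := chain H hG i 0 (by rwa [zero_add])
    rwa [zero_add, ds_zero] at this
  have htower := Subgroup.relIndex_mul_relIndex ⁅H, H⁆ (ds H i) H hH'le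
    (ds_le_self H i)
  have ha1 : (⁅H, H⁆).relIndex (ds H i) = 1 := by
    have hne0 : (⁅H, H⁆).relIndex (ds H i) ≠ 0 := relindex_ne_zero' _ _
    have hb0 : 0 < (ds H i).relIndex H := Nat.pos_of_ne_zero (relindex_ne_zero' _ _)
    by_contra hne1
    have ha2 : 2 ≤ (⁅H, H⁆).relIndex (ds H i) := by omega
    have h4 : 2 * ((ds H i).relIndex H) ≤ p ^ m := by
      rw [← hm, ← htower]
      exact Nat.mul_le_mul_right _ ha2
    have hmle : p ^ m ≤ p ^ i := Nat.pow_le_pow_right hp.out.pos hmi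
    omega
  have hdsi : ds H i = ⁅H, H⁆ :=
    le_antisymm (Subgroup.relIndex_eq_one.mp ha1) hH'le
  -- the first step of the chain has relindex exactly p
  obtain ⟨t, ht⟩ := relindex_ppow hG (ds H 1) H
  have hdesc0 : ¬ H ≤ ds H 1 := by
    rw [ds_succ]
    exact not_le_of_gt (ds_descend hG hHbot)
  have ht1 : 1 ≤ t := by
    rcases Nat.eq_zero_or_pos t with rfl | h'
    · rw [pow_zero] at ht
      exact absurd (Subgroup.relIndex_eq_one.mp ht) hdesc0
    · exact h'
  have ht2 : t ≤ 1 := by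
    by_contra hgt
    push_neg at hgt
    have hchain1 : p ^ (i - 1) ≤ (ds H i).relIndex (ds H 1) := by
      have := chain H hG (i - 1) 1 (by rw [show 1 + (i - 1) = i by omega]; exact hdsibot)
      rwa [show 1 + (i - 1) = i by omega] at this
    have tower2 := Subgroup.relIndex_mul_relIndex ⁅H, H⁆ (ds H i) (ds H 1) hH'le
      (ds_antitone H hi)
    have tower3 := Subgroup.relIndex_mul_relIndex ⁅H, H⁆ (ds H 1) H
      (le_trans hH'le (ds_antitone H hi)) (ds_le_self H 1)
    have hpos : 1 ≤ (⁅H, H⁆).relIndex (ds H i) := Nat.one_le_iff_ne_zero.mpr (relindex_ne_zero' _ _)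
    have h2 : p ^ (i - 1) ≤ (⁅H, H⁆).relIndex (ds H 1) := by
      calc p ^ (i - 1) = 1 * p ^ (i - 1) := (one_mul _).symm
        _ ≤ (⁅H, H⁆).relIndex (ds H i) * (ds H i).relIndex (ds H 1) :=
            Nat.mul_le_mul hpos hchain1
        _ = (⁅H, H⁆).relIndex (ds H 1) := tower2
    have h3 : p ^ (i + 1) ≤ (⁅H, H⁆).relIndex H := by
      calc p ^ (i + 1) = p ^ (i - 1) * p ^ 2 := by rw [← pow_add]; congr 1; omega
        _ ≤ (⁅H, H⁆).relIndex (ds H 1) * (ds H 1).relIndex H := by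
            refine Nat.mul_le_mul h2 ?_
            rw [ht]
            exact Nat.pow_le_pow_right hp.out.pos hgt
        _ = (⁅H, H⁆).relIndex H := tower3
    exact absurd h3 (not_le_of_gt hcon)
  have hr0 : (ds H 1).relIndex H = p := by
    rw [ht, show t = 1 by omega, pow_one]
  -- D (i+1) = ⊥ and the upper central series bound
  have hDi1 : ds H (i + 1) = ⊥ := by
    rw [ds_succ, hdsi]
    exact hcent
  have hucs : ∀ t, ds H (i + 1 - t) ≤ Subgroup.upperCentralSeries G t := by
    intro t
    induction t with
    | zero =>
      rw [Nat.sub_zero, hDi1]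
      exact bot_le
    | succ t ih =>
      intro x hx
      rw [Subgroup.mem_upperCentralSeries_succ_iff]
      intro y
      have hxy : ⁅x, y⁆ ∈ ⁅ds H (i + 1 - (t + 1)), ⊤⁆ :=
        commutator_mem_commutator hx (mem_top y)
      rw [← ds_succ] at hxy
      have hle2 : ds H ((i + 1 - (t + 1)) + 1) ≤ ds H (i + 1 - t) := ds_antitone H (by omega)
      exact ih (hle2 hxy)
  have hD1 : ds H 1 ≤ Subgroup.upperCentralSeries G i := by
    have := hucs i
    rwa [show i + 1 - i = 1 by omega] at this
  have horth : ⁅H, ds H 1⁆ ≤ ⊥ := by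
    have h := lcs_ucs (G := G) (i - 1) 0
    rw [show i - 1 + 0 + 1 = i by omega] at h
    calc ⁅H, ds H 1⁆ ≤ ⁅Subgroup.lowerCentralSeries (⊤ : Subgroup G) (i - 1), Subgroup.upperCentralSeries G i⁆ :=
          commutator_mono hle hD1
      _ ≤ Subgroup.upperCentralSeries G 0 := h
      _ = ⊥ := rfl
  have hcomm : ∀ x ∈ H, ∀ y ∈ ds H 1, x * y = y * x := by
    intro x hx y hy
    have := horth (commutator_mem_commutator hx hy)
    rw [Subgroup.mem_bot] at this
    exact commutatorElement_eq_one_iff_mul_comm.mp this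
  have hex : ∃ x ∈ H, ∃ y ∈ H, ⁅x, y⁆ ≠ 1 := by
    by_contra hall
    push_neg at hall
    refine hne (le_bot_iff.mp (commutator_le.mpr fun a ha b hb => ?_))
    rw [Subgroup.mem_bot]
    exact hall a ha b hb
  obtain ⟨x, hx, y, hy, hxy⟩ := hex
  apply hxy
  rw [commutatorElement_eq_one_iff_mul_comm]
  by_cases hxD : x ∈ ds H 1
  · exact (hcomm y hy x hxD).symm
  · have hxK : x ∈ closure {x} ⊔ ds H 1 :=
      (le_sup_left : closure {x} ≤ _) (subset_closure (Set.mem_singleton x))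
    have hKH : closure {x} ⊔ ds H 1 ≤ H :=
      sup_le ((closure_le _).mpr (Set.singleton_subset_iff.mpr hx)) (ds_le_self H 1)
    have hDK : ds H 1 ≤ closure {x} ⊔ ds H 1 := le_sup_right
    have htower4 := Subgroup.relIndex_mul_relIndex (ds H 1) (closure {x} ⊔ ds H 1) H hDK hKH
    rw [hr0] at htower4
    have hdvd : (ds H 1).relIndex (closure {x} ⊔ ds H 1) ∣ p :=
      Dvd.intro _ htower4
    rcases (hp.out.eq_one_or_self_of_dvd _ hdvd) with h1 | hps
    · exact absurd (Subgroup.relIndex_eq_one.mp h1 hxK) hxD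
    · have hKH1 : (closure {x} ⊔ ds H 1).relIndex H = 1 := by
        rw [hps] at htower4
        have h5 : p * (closure {x} ⊔ ds H 1).relIndex H = p * 1 := by
          rw [mul_one]; exact htower4
        exact Nat.eq_of_mul_eq_mul_left hp.out.pos h5
      have hHK : H ≤ closure {x} ⊔ ds H 1 := Subgroup.relIndex_eq_one.mp hKH1
      have hcent2 : closure {x} ⊔ ds H 1 ≤ Subgroup.centralizer {x} := by
        apply sup_le
        · refine (closure_le _).mpr (Set.singleton_subset_iff.mpr ?_)
          exact Subgroup.mem_centralizer_iff.mpr fun g hg => by rw [Set.mem_singleton_iff] at hg; rw [hg]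
        · intro d hd
          exact Subgroup.mem_centralizer_iff.mpr fun g hg => by
            rw [Set.mem_singleton_iff] at hg
            rw [hg]
            exact hcomm x hx d hd
      have hyK : y ∈ Subgroup.centralizer {x} := hcent2 (hHK hy)
      exact Subgroup.mem_centralizer_iff.mp hyK x rfl

end HallHelper

theorem hall_lemma
    {p : ℕ} [Fact p.Prime]
    {G : Type*} [Group G] [Finite G] (hG : IsPGroup p G)
    (H : Subgroup G) [H.Normal]
    (hnab : ∃ x ∈ H, ∃ y ∈ H, x * y ≠ y * x)
    (i : ℕ) (hi : 1 ≤ i)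
    (hle : H ≤ Subgroup.lowerCentralSeries (⊤ : Subgroup G) (i - 1)) :
    p ^ (i + 1) ≤ (⁅H, H⁆).relIndex H ∧ p ^ (i + 2) ≤ Nat.card H := by
  obtain ⟨x, hx, y, hy, hxy⟩ := hnab
  have hH'ne : ⁅H, H⁆ ≠ ⊥ := by
    intro hbot
    apply hxy
    have := commutator_mem_commutator hx hy
    rw [hbot, Subgroup.mem_bot] at this
    exact commutatorElement_eq_one_iff_mul_comm.mp this
  have hMle : ⁅⁅H, H⁆, (⊤ : Subgroup G)⁆ ≤ ⁅H, H⁆ := commutator_le_left _ _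
  have hfsurj : Function.Surjective (QuotientGroup.mk' ⁅⁅H, H⁆, (⊤ : Subgroup G)⁆) :=
    QuotientGroup.mk'_surjective _
  have hker : (QuotientGroup.mk' ⁅⁅H, H⁆, (⊤ : Subgroup G)⁆).ker = ⁅⁅H, H⁆, (⊤ : Subgroup G)⁆ :=
    QuotientGroup.ker_mk' _
  set f := QuotientGroup.mk' ⁅⁅H, H⁆, (⊤ : Subgroup G)⁆ with hf
  haveI : (H.map f).Normal := Subgroup.Normal.map ‹H.Normal› f hfsurj
  have hGq : IsPGroup p (G ⧸ ⁅⁅H, H⁆, (⊤ : Subgroup G)⁆) := hG.to_quotient _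
  have hcent' : ⁅⁅H.map f, H.map f⁆, (⊤ : Subgroup (G ⧸ ⁅⁅H, H⁆, (⊤ : Subgroup G)⁆))⁆ = ⊥ := by
    rw [← map_commutator, ← Subgroup.map_top_of_surjective f hfsurj, ← map_commutator,
      Subgroup.map_eq_bot_iff, hker]
  have hne' : ⁅H.map f, H.map f⁆ ≠ ⊥ := by
    intro hbot
    rw [← map_commutator, Subgroup.map_eq_bot_iff, hker] at hbot
    exact not_le_of_gt (HallHelper.ds_descend hG hH'ne) hbot
  have hle' : H.map f ≤ Subgroup.lowerCentralSeries ⊤ (i - 1) :=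
    le_trans (Subgroup.map_mono hle) (Subgroup.lowerCentralSeries.map f (i - 1))
  have key := HallHelper.aux hGq (H.map f) hne' hcent' i hi hle'
  have htrans : (⁅H.map f, H.map f⁆).relIndex (H.map f) = (⁅H, H⁆).relIndex H := by
    rw [← map_commutator]
    have hcomap : ((⁅H, H⁆).map f).comap f = ⁅H, H⁆ := by
      rw [Subgroup.comap_map_eq, hker, sup_eq_left.mpr hMle]
    conv_rhs => rw [← hcomap]
    rw [Subgroup.relIndex_comap]
  rw [htrans] at key
  refine ⟨key, ?_⟩
  have hle2 : ⁅H, H⁆ ≤ H := commutator_le_left H H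
  have hcard : Nat.card ((⁅H, H⁆).subgroupOf H) * ((⁅H, H⁆).subgroupOf H).index = Nat.card H :=
    Subgroup.card_mul_index _
  have hcardeq : Nat.card ((⁅H, H⁆).subgroupOf H) = Nat.card (⁅H, H⁆ : Subgroup G) :=
    Nat.card_congr (Subgroup.subgroupOfEquivOfLe hle2).toEquiv
  have hpH' : p ≤ Nat.card (⁅H, H⁆ : Subgroup G) := by
    obtain ⟨k, hk⟩ := IsPGroup.iff_card.mp (hG.to_subgroup ⁅H, H⁆)
    have hk0 : k ≠ 0 := by
      rintro rfl
      rw [pow_zero] at hk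
      exact hH'ne (Subgroup.card_eq_one.mp hk)
    calc p = p ^ 1 := (pow_one p).symm
      _ ≤ p ^ k := Nat.pow_le_pow_right (Fact.out : p.Prime).pos (by omega)
      _ = Nat.card (⁅H, H⁆ : Subgroup G) := hk.symm
  calc p ^ (i + 2) = p ^ (i + 1) * p := by ring
    _ ≤ (⁅H, H⁆).relIndex H * Nat.card (⁅H, H⁆ : Subgroup G) := Nat.mul_le_mul key hpH'
    _ = Nat.card H := by rw [← hcardeq, mul_comm]; exact hcard
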